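/- For each n ≥ 0, the subspace A_n is invariant under R and S, and the only subspaces of A_n invariant under both R and S are 0 and A_n. (Irreducibility of the multiplicity spaces of the scaling ℂ*-action on the cone under the invariant derivations, Proposition 5.3, part 1.) -/

import Mathlib

/-- The ring `ℂ[u, t, t⁻¹]` of polynomials in `u` that are Laurent polynomials
in `t`, realized as the monoid algebra of `ℕ × ℤ` over `ℂ`. -/
abbrev PolyLaurent : Type := AddMonoidAlgebra ℂ (ℕ × ℤ)

/-- The monomial `uⁿ tᵐ` in `ℂ[u, t, t⁻¹]`. -/
noncomputable def mono (n : ℕ) (m : ℤ) : PolyLaurent :=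
  AddMonoidAlgebra.single (n, m) 1

/-- The partial derivative `∂_u` of `ℂ[u, t, t⁻¹]`, sending `uⁿtᵐ` to
`n·u^{n−1}tᵐ`. -/
noncomputable def du : PolyLaurent →ₗ[ℂ] PolyLaurent :=
  (AddMonoidAlgebra.coeffLinearEquiv ℂ).symm.toLinearMap ∘ₗ
    Finsupp.lsum ℂ (fun (p : ℕ × ℤ) => (p.1 : ℂ) • Finsupp.lsingle (p.1 - 1, p.2)) ∘ₗ
    (AddMonoidAlgebra.coeffLinearEquiv ℂ).toLinearMap

/-- The partial derivative `∂_t` of `ℂ[u, t, t⁻¹]`, sending `uⁿtᵐ` to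
`m·uⁿt^{m−1}`. -/
noncomputable def dt : PolyLaurent →ₗ[ℂ] PolyLaurent :=
  (AddMonoidAlgebra.coeffLinearEquiv ℂ).symm.toLinearMap ∘ₗ
    Finsupp.lsum ℂ (fun (p : ℕ × ℤ) => (p.2 : ℂ) • Finsupp.lsingle (p.1, p.2 - 1)) ∘ₗ
    (AddMonoidAlgebra.coeffLinearEquiv ℂ).toLinearMap

/-- The derivation `R := u·t·∂_u − t²·∂_t`, acting by
`R(uⁿtᵐ) = (n − m)·uⁿt^{m+1}`. -/
noncomputable def Rop : PolyLaurent →ₗ[ℂ] PolyLaurent :=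
  (LinearMap.mulLeft ℂ (mono 1 1)) ∘ₗ du - (LinearMap.mulLeft ℂ (mono 0 2)) ∘ₗ dt

/-- The derivation `S := u·t⁻¹·∂_u + ∂_t`, acting by
`S(uⁿtᵐ) = (n + m)·uⁿt^{m−1}`. -/
noncomputable def Sop : PolyLaurent →ₗ[ℂ] PolyLaurent :=
  (LinearMap.mulLeft ℂ (mono 1 (-1))) ∘ₗ du + dt

/-- `A_n`: the span of the monomials `uⁿtᵐ` with `−n ≤ m ≤ n`, i.e. the
weight-`n` space of the `ℂ*`-action scaling `u` on the coordinate ring of the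
cone. -/
noncomputable def coneAn (n : ℕ) : Submodule ℂ PolyLaurent :=
  Submodule.span ℂ {x : PolyLaurent | ∃ m : ℤ, -(n : ℤ) ≤ m ∧ m ≤ n ∧ x = mono n m}

lemma mono_mul (a c : ℕ) (b d : ℤ) : mono a b * mono c d = mono (a+c) (b+d) := by
  simp [mono, AddMonoidAlgebra.single_mul_single]

lemma du_mono (n : ℕ) (m : ℤ) : du (mono n m) = (n : ℂ) • mono (n-1) m := by
  unfold du mono
  change AddMonoidAlgebra.ofCoeff (Finsupp.lsum ℂ _ (Finsupp.single (n, m) (1:ℂ))) = _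
  rw [Finsupp.lsum_single]
  show AddMonoidAlgebra.ofCoeff ((n:ℂ) • (Finsupp.single ((n:ℕ)-1, m) (1:ℂ))) = _
  rw [AddMonoidAlgebra.ofCoeff_smul]
  rfl

lemma dt_mono (n : ℕ) (m : ℤ) : dt (mono n m) = (m : ℂ) • mono n (m-1) := by
  unfold dt mono
  change AddMonoidAlgebra.ofCoeff (Finsupp.lsum ℂ _ (Finsupp.single (n, m) (1:ℂ))) = _
  rw [Finsupp.lsum_single]
  show AddMonoidAlgebra.ofCoeff ((m:ℂ) • (Finsupp.single (n, m-1) (1:ℂ))) = _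
  rw [AddMonoidAlgebra.ofCoeff_smul]
  rfl

lemma Rop_mono (n : ℕ) (m : ℤ) : Rop (mono n m) = ((n : ℂ) - m) • mono n (m+1) := by
  simp only [Rop, LinearMap.sub_apply, LinearMap.comp_apply, du_mono, dt_mono,
    map_smul, LinearMap.mulLeft_apply, mono_mul]
  rw [sub_smul]
  cases n with
  | zero =>
    norm_num
    rw [show 2+(m-1) = m+1 by omega]
  | succ k =>
    norm_num
    rw [show 2+(m-1) = m+1 by omega, show 1+m = m+1 by omega, show 1+k = k+1 by omega]

lemma Sop_mono (n : ℕ) (m : ℤ) : Sop (mono n m) = ((n : ℂ) + m) • mono n (m-1) := by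
  simp only [Sop, LinearMap.add_apply, LinearMap.comp_apply, du_mono, dt_mono,
    map_smul, LinearMap.mulLeft_apply, mono_mul]
  rw [add_smul]
  cases n with
  | zero =>
    norm_num
  | succ k =>
    norm_num
    rw [show -1+m = m-1 by omega, show 1+k = k+1 by omega]

lemma Sop_pow_mono (k : ℕ) (n : ℕ) (m : ℤ) :
    (Sop ^ k) (mono n m) =
      (∏ i ∈ Finset.range k, ((n : ℂ) + m - i)) • mono n (m - k) := by
  induction k generalizing m with
  | zero => simp
  | succ k ih =>
    rw [pow_succ, Module.End.mul_apply, Sop_mono, map_smul, ih, smul_smul,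
      Finset.prod_range_succ']
    have h2 : m - 1 - (k:ℤ) = m - ((k+1 : ℕ) : ℤ) := by push_cast; ring
    rw [h2]
    congr 1
    rw [mul_comm]
    congr 1
    · refine Finset.prod_congr rfl fun i _ => ?_
      push_cast
      ring
    · push_cast
      ring

lemma mono_mem {n : ℕ} {m : ℤ} (h1 : -(n:ℤ) ≤ m) (h2 : m ≤ (n:ℤ)) :
    mono n m ∈ coneAn n :=
  Submodule.subset_span ⟨m, h1, h2, rfl⟩

lemma mono_apply (n a : ℕ) (m b : ℤ) :
    (mono n m).coeff (a, b) = if (n, m) = (a, b) then 1 else 0 :=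
  Finsupp.single_apply

/-- Expansion of an element of `A_n` in the monomial basis. -/
lemma coneAn_expand {n : ℕ} {x : PolyLaurent} (hx : x ∈ coneAn n) :
    x = ∑ m ∈ Finset.Icc (-(n:ℤ)) (n:ℤ), x.coeff (n, m) • mono n m := by
  refine Submodule.span_induction (p := fun x _ =>
      x = ∑ m ∈ Finset.Icc (-(n:ℤ)) (n:ℤ), x.coeff (n, m) • mono n m) ?_ ?_ ?_ ?_ hx
  · rintro _ ⟨m, h1, h2, rfl⟩
    rw [Finset.sum_eq_single m]
    · rw [mono_apply]; simp
    · intro b hb hbm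
      rw [mono_apply, if_neg (by simp [hbm.symm] : ¬ (n, m) = (n, b)), zero_smul]
    · intro h
      exact absurd (Finset.mem_Icc.mpr ⟨h1, h2⟩) h
  · simp
  · intro a b _ _ ha hb
    conv_lhs => rw [ha, hb]
    rw [← Finset.sum_add_distrib]
    exact Finset.sum_congr rfl fun m _ => by rw [AddMonoidAlgebra.coeff_add, Finsupp.add_apply, add_smul]
  · intro c a _ ha
    conv_lhs => rw [ha]
    rw [Finset.smul_sum]
    exact Finset.sum_congr rfl fun m _ => by rw [AddMonoidAlgebra.coeff_smul, Finsupp.smul_apply, smul_smul, smul_eq_mul]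

lemma pow_mem_invariant {p : Submodule ℂ PolyLaurent} {f : PolyLaurent →ₗ[ℂ] PolyLaurent}
    (hf : ∀ x ∈ p, f x ∈ p) (k : ℕ) {x : PolyLaurent} (hx : x ∈ p) : (f ^ k) x ∈ p := by
  induction k with
  | zero => simpa using hx
  | succ k ih => rw [pow_succ', Module.End.mul_apply]; exact hf _ ih

/-- **Irreducibility of the multiplicity spaces of the scaling `ℂ*`-action on
the cone (Proposition 5.3, part 1).**
Each `A_n` is invariant under `R` and `S`, and the only subspaces of `A_n`
invariant under both `R` and `S` are `0` and `A_n`. -/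
theorem cone_scaling_multiplicity_spaces_irreducible (n : ℕ) :
    (∀ x ∈ coneAn n, Rop x ∈ coneAn n ∧ Sop x ∈ coneAn n) ∧
    (∀ p : Submodule ℂ PolyLaurent, p ≤ coneAn n →
      (∀ x ∈ p, Rop x ∈ p ∧ Sop x ∈ p) → p = ⊥ ∨ p = coneAn n) := by
  constructor
  · -- invariance of A_n
    have hR : coneAn n ≤ (coneAn n).comap Rop := by
      rw [coneAn, Submodule.span_le]
      rintro _ ⟨m, h1, h2, rfl⟩
      simp only [SetLike.mem_coe, Submodule.mem_comap, Rop_mono]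
      rcases eq_or_lt_of_le h2 with rfl | hlt
      · rw [show ((n:ℂ) - (((n:ℤ)):ℂ)) = 0 by push_cast; ring, zero_smul]
        exact Submodule.zero_mem _
      · exact Submodule.smul_mem _ _ (mono_mem (by omega) (by omega))
    have hS : coneAn n ≤ (coneAn n).comap Sop := by
      rw [coneAn, Submodule.span_le]
      rintro _ ⟨m, h1, h2, rfl⟩
      simp only [SetLike.mem_coe, Submodule.mem_comap, Sop_mono]
      rcases eq_or_lt_of_le h1 with rfl | hlt
      · rw [show ((n:ℂ) + (((-(n:ℤ) : ℤ)):ℂ)) = 0 by push_cast; ring, zero_smul]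
        exact Submodule.zero_mem _
      · exact Submodule.smul_mem _ _ (mono_mem (by omega) (by omega))
    exact fun x hx => ⟨hR hx, hS hx⟩
  · intro p hle hinv
    by_cases hp : p = ⊥
    · exact Or.inl hp
    right
    obtain ⟨x, hxp, hx0⟩ := (Submodule.ne_bot_iff p).mp hp
    have hx : x ∈ coneAn n := hle hxp
    -- the set of indices with nonzero coordinate
    set T : Finset ℤ := (Finset.Icc (-(n:ℤ)) (n:ℤ)).filter (fun m => x.coeff (n, m) ≠ 0) with hT
    have hTne : T.Nonempty := by
      by_contra h
      rw [Finset.not_nonempty_iff_eq_empty, hT, Finset.filter_eq_empty_iff] at h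
      apply hx0
      rw [coneAn_expand hx]
      refine Finset.sum_eq_zero fun m hm => ?_
      rw [not_not.mp (h hm), zero_smul]
    set m0 : ℤ := T.max' hTne with hm0
    have hm0T : m0 ∈ T := T.max'_mem hTne
    have hm0Icc : m0 ∈ Finset.Icc (-(n:ℤ)) (n:ℤ) := (Finset.mem_filter.mp hm0T).1
    have hxm0 : x.coeff (n, m0) ≠ 0 := (Finset.mem_filter.mp hm0T).2
    obtain ⟨hlow, hhigh⟩ := Finset.mem_Icc.mp hm0Icc
    set k : ℕ := (n + m0).toNat with hkdef
    have hk : (k : ℤ) = n + m0 := Int.toNat_of_nonneg (by omega)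
    -- S^k x is a nonzero multiple of mono n (-n)
    have hSkx : (Sop ^ k) x =
        (x.coeff (n, m0) * ∏ i ∈ Finset.range k, ((n : ℂ) + m0 - i)) • mono n (-(n:ℤ)) := by
      conv_lhs => rw [coneAn_expand hx]
      rw [map_sum]
      rw [Finset.sum_eq_single m0]
      · rw [map_smul, Sop_pow_mono, smul_smul]
        congr 2
        omega
      · intro m hm hne
        rcases lt_or_gt_of_ne hne with hlt | hgt
        · -- m < m0 : the product vanishes
          rw [map_smul, Sop_pow_mono]
          have hmem : m ∈ Finset.Icc (-(n:ℤ)) (n:ℤ) := hm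
          obtain ⟨hl, _⟩ := Finset.mem_Icc.mp hmem
          have h0 : (∏ i ∈ Finset.range k, ((n : ℂ) + m - i)) = 0 := by
            refine Finset.prod_eq_zero (i := (n + m).toNat) ?_ ?_
            · rw [Finset.mem_range]; omega
            · have : (((n + m).toNat : ℤ) : ℂ) = (n : ℂ) + m := by
                rw [Int.toNat_of_nonneg (by omega)]; push_cast; ring
              push_cast at this ⊢
              rw [this]; ring
          rw [h0, zero_smul, smul_zero]
        · -- m > m0 : the coordinate vanishes
          have : x.coeff (n, m) = 0 := by
            by_contra hxy
            have : m ∈ T := Finset.mem_filter.mpr ⟨hm, hxy⟩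
            exact absurd (Finset.le_max' T m this) (not_le.mpr hgt)
          rw [this, zero_smul, map_zero]
      · intro h
        exact absurd hm0Icc h
    have hcne : (x.coeff (n, m0) * ∏ i ∈ Finset.range k, ((n : ℂ) + m0 - i)) ≠ 0 := by
      refine mul_ne_zero hxm0 (Finset.prod_ne_zero_iff.mpr fun i hi => ?_)
      rw [Finset.mem_range] at hi
      have : ((n : ℂ) + m0 - i) = ((n + m0 - i : ℤ) : ℂ) := by push_cast; ring
      rw [this]
      exact_mod_cast (by omega : (n : ℤ) + m0 - i ≠ 0)
    -- so mono n (-n) ∈ p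
    have hbot : mono n (-(n:ℤ)) ∈ p := by
      have h1 : (Sop ^ k) x ∈ p := pow_mem_invariant (fun y hy => (hinv y hy).2) k hxp
      rw [hSkx] at h1
      have := Submodule.smul_mem p (x.coeff (n, m0) * ∏ i ∈ Finset.range k, ((n : ℂ) + m0 - i))⁻¹ h1
      rwa [smul_smul, inv_mul_cancel₀ hcne, one_smul] at this
    -- raising operator fills out everything
    have hall : ∀ j : ℕ, j ≤ 2 * n → mono n (-(n:ℤ) + j) ∈ p := by
      intro j
      induction j with
      | zero => intro _; simpa using hbot
      | succ j ih =>
        intro hj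
        have hprev := ih (by omega)
        obtain ⟨c, hc0, hc⟩ : ∃ c : ℂ, c ≠ 0 ∧
            Rop (mono n (-(n:ℤ) + j)) = c • mono n (-(n:ℤ) + ((j+1 : ℕ) : ℤ)) := by
          refine ⟨((n : ℂ) - ((-(n:ℤ) + j : ℤ) : ℂ)), ?_, ?_⟩
          · rw [show ((n : ℂ) - ((-(n:ℤ) + j : ℤ) : ℂ)) = ((2 * n - j : ℤ) : ℂ) by
              push_cast; ring]
            exact_mod_cast (by omega : (2 * (n:ℤ) - j) ≠ 0)
          · rw [Rop_mono, show (-(n:ℤ) + j) + 1 = -(n:ℤ) + ((j+1 : ℕ) : ℤ) by push_cast; ring]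
        have hstep := (hinv _ hprev).1
        rw [hc] at hstep
        have := Submodule.smul_mem p c⁻¹ hstep
        rwa [smul_smul, inv_mul_cancel₀ hc0, one_smul] at this
    refine le_antisymm hle ?_
    rw [coneAn, Submodule.span_le]
    rintro _ ⟨m, h1, h2, rfl⟩
    have hj : ((m + n).toNat : ℤ) = m + n := Int.toNat_of_nonneg (by omega)
    have : mono n m = mono n (-(n:ℤ) + (m + n).toNat) := by
      congr 1; omega
    rw [this]
    exact hall _ (by omega)
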